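/- Let 0<λ≤1, f ∈ 𝒰(λ) with f(z)/z ≺ 1/((1-z)(1-λz)), and f⁻¹(w)=w+A₂w²+A₃w³+⋯. Then |A₃| ≤ 1+3λ+λ², with equality for f_λ(z)=z/((1-z)(1-λz)). -/

import Mathlib

open Metric Filter

lemma myAnalyticAt.deriv {f : ℂ → ℂ} {x : ℂ} (h : AnalyticAt ℂ f x) :
    AnalyticAt ℂ (deriv f) x := by
  obtain ⟨s, hs, hf⟩ := h.eventually_analyticAt.exists_mem
  exact (AnalyticOnNhd.deriv (fun y hy => hf y hy)) x (mem_of_mem_nhds hs)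



lemma coefF (μ ν : ℂ) (f w : ℂ → ℂ) (hf : AnalyticAt ℂ f 0) (hw : AnalyticAt ℂ w 0)
    (hw0 : w 0 = 0)
    (hEq : ∀ᶠ z in nhds (0:ℂ), z = f z * (1 - μ * w z + ν * (w z)^2)) :
    deriv f 0 = 1 ∧ deriv (deriv f) 0 = 2*μ*deriv w 0 ∧
    deriv (deriv (deriv f)) 0 =
      6*μ^2*(deriv w 0)^2 + 3*μ*(deriv (deriv w) 0) - 6*ν*(deriv w 0)^2 := by
  have hev : ∀ᶠ z in nhds (0:ℂ), AnalyticAt ℂ f z ∧ AnalyticAt ℂ w z :=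
    hf.eventually_analyticAt.and hw.eventually_analyticAt
  have hq : (fun z : ℂ => z) =ᶠ[nhds 0] fun z => f z * (1 - μ * w z + ν * (w z)^2) := hEq
  have hf0 : f 0 = 0 := by
    have h0 := hq.eq_of_nhds
    simp [hw0] at h0
    exact h0.symm
  set F1 : ℂ → ℂ := fun z => deriv f z * (1 - μ * w z + ν * (w z) ^ 2)
      + f z * (2*ν*(w z * deriv w z) - μ * deriv w z) with hF1
  have E1 : deriv (fun z => f z * (1 - μ * w z + ν * (w z)^2)) =ᶠ[nhds 0] F1 := by
    filter_upwards [hev] with z hz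
    have Hf : HasDerivAt f (deriv f z) z := hz.1.differentiableAt.hasDerivAt
    have Hw : HasDerivAt w (deriv w z) z := hz.2.differentiableAt.hasDerivAt
    have Hw2 : HasDerivAt (fun y => (w y)^2) (2 * w z * deriv w z) z := by
      simpa [mul_assoc] using Hw.fun_pow 2
    have HQ := ((Hw.const_mul μ).const_sub 1).add (Hw2.const_mul ν)
    have h := Hf.mul HQ
    exact h.deriv.trans (by simp only [hF1, Pi.add_apply, Pi.sub_apply, Pi.mul_apply]; ring)
  have chain1 : (fun _ : ℂ => (1:ℂ)) =ᶠ[nhds 0] F1 := by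
    have := hq.deriv.trans E1
    rwa [deriv_id''] at this
  have hd1 : deriv f 0 = 1 := by
    have h0 := chain1.eq_of_nhds
    simp [hF1, hw0, hf0] at h0
    exact h0.symm
  set F2 : ℂ → ℂ := fun z => (deriv (deriv f) z * (1 - μ * w z + ν * (w z) ^ 2)
      + deriv f z * (2*ν*(w z * deriv w z) - μ * deriv w z))
      + (deriv f z * (2*ν*(w z * deriv w z) - μ * deriv w z)
      + f z * (2*ν*(deriv w z * deriv w z + w z * deriv (deriv w) z) - μ * deriv (deriv w) z))
      with hF2
  have E2 : deriv F1 =ᶠ[nhds 0] F2 := by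
    filter_upwards [hev] with z hz
    have Hf : HasDerivAt f (deriv f z) z := hz.1.differentiableAt.hasDerivAt
    have Hw : HasDerivAt w (deriv w z) z := hz.2.differentiableAt.hasDerivAt
    have Hf1 : HasDerivAt (deriv f) (deriv (deriv f) z) z :=
      (myAnalyticAt.deriv hz.1).differentiableAt.hasDerivAt
    have Hw1 : HasDerivAt (deriv w) (deriv (deriv w) z) z :=
      (myAnalyticAt.deriv hz.2).differentiableAt.hasDerivAt
    have Hw2 : HasDerivAt (fun y => (w y)^2) (2 * w z * deriv w z) z := by
      simpa [mul_assoc] using Hw.fun_pow 2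
    have HQ := ((Hw.const_mul μ).const_sub 1).add (Hw2.const_mul ν)
    have HQ1 := (((Hw.mul Hw1).const_mul (2*ν))).sub (Hw1.const_mul μ)
    have h := (Hf1.mul HQ).add (Hf.mul HQ1)
    exact h.deriv.trans (by simp only [hF2, Pi.add_apply, Pi.sub_apply, Pi.mul_apply]; ring)
  have chain2 : (fun _ : ℂ => (0:ℂ)) =ᶠ[nhds 0] F2 := by
    have := chain1.deriv.trans E2
    have hc : deriv (fun _ : ℂ => (1:ℂ)) = fun _ : ℂ => (0:ℂ) := by
      funext x; simp
    rwa [hc] at this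
  have hd2 : deriv (deriv f) 0 = 2*μ*deriv w 0 := by
    have h0 := chain2.eq_of_nhds
    simp [hF2, hw0, hf0, hd1] at h0
    linear_combination -h0
  refine ⟨hd1, hd2, ?_⟩
  have chain3 : (fun _ : ℂ => (0:ℂ)) =ᶠ[nhds 0] deriv F2 := by
    have := chain2.deriv
    have hc : deriv (fun _ : ℂ => (0:ℂ)) = fun _ : ℂ => (0:ℂ) := by
      funext x; simp
    rwa [hc] at this
  have h0 := chain3.eq_of_nhds
  -- compute deriv F2 0 via HasDerivAt at 0
  have hz : AnalyticAt ℂ f 0 ∧ AnalyticAt ℂ w 0 := ⟨hf, hw⟩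
  have Hf : HasDerivAt f (deriv f 0) 0 := hz.1.differentiableAt.hasDerivAt
  have Hw : HasDerivAt w (deriv w 0) 0 := hz.2.differentiableAt.hasDerivAt
  have Hf1 : HasDerivAt (deriv f) (deriv (deriv f) 0) 0 :=
    (myAnalyticAt.deriv hz.1).differentiableAt.hasDerivAt
  have Hw1 : HasDerivAt (deriv w) (deriv (deriv w) 0) 0 :=
    (myAnalyticAt.deriv hz.2).differentiableAt.hasDerivAt
  have Hf2 : HasDerivAt (deriv (deriv f)) (deriv (deriv (deriv f)) 0) 0 :=
    (myAnalyticAt.deriv (myAnalyticAt.deriv hz.1)).differentiableAt.hasDerivAt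
  have Hw2' : HasDerivAt (deriv (deriv w)) (deriv (deriv (deriv w)) 0) 0 :=
    (myAnalyticAt.deriv (myAnalyticAt.deriv hz.2)).differentiableAt.hasDerivAt
  have Hw2 : HasDerivAt (fun y => (w y)^2) (2 * w 0 * deriv w 0) 0 := by
    simpa [mul_assoc] using Hw.fun_pow 2
  have HQ := ((Hw.const_mul μ).const_sub 1).add (Hw2.const_mul ν)
  have HQ1 := (((Hw.mul Hw1).const_mul (2*ν))).sub (Hw1.const_mul μ)
  have HQ2 := ((((Hw1.mul Hw1).add (Hw.mul Hw2')).const_mul (2*ν))).sub (Hw2'.const_mul μ)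
  have hder := ((Hf2.mul HQ).add (Hf1.mul HQ1)).add ((Hf1.mul HQ1).add (Hf.mul HQ2))
  have hval : deriv F2 0 = _ := hder.deriv
  rw [hval] at h0
  simp only [Pi.add_apply, Pi.sub_apply, Pi.mul_apply] at h0
  rw [hw0, hf0, hd1, hd2] at h0
  linear_combination -h0

lemma inv3 (f g : ℂ → ℂ) (hf : AnalyticAt ℂ f 0) (hg : AnalyticAt ℂ g 0) (hg0 : g 0 = 0)
    (hf1 : deriv f 0 = 1) (hinv : ∀ᶠ w in nhds (0:ℂ), f (g w) = w) :
    deriv (deriv (deriv g)) 0 = 3*(deriv (deriv f) 0)^2 - deriv (deriv (deriv f)) 0 := by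
  have ht : Tendsto g (nhds 0) (nhds 0) := by
    simpa [hg0] using hg.continuousAt.tendsto
  have hevg : ∀ᶠ w in nhds (0:ℂ), AnalyticAt ℂ g w := hg.eventually_analyticAt
  have hevf : ∀ᶠ w in nhds (0:ℂ), AnalyticAt ℂ f (g w) := ht.eventually hf.eventually_analyticAt
  have hq : (fun w => f (g w)) =ᶠ[nhds (0:ℂ)] fun w => w := hinv
  set F1 : ℂ → ℂ := fun w => deriv f (g w) * deriv g w with hF1
  have E1 : deriv (fun w => f (g w)) =ᶠ[nhds 0] F1 := by
    filter_upwards [hevg, hevf] with w hgw hfw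
    have Hg : HasDerivAt g (deriv g w) w := hgw.differentiableAt.hasDerivAt
    have Hf : HasDerivAt f (deriv f (g w)) (g w) := hfw.differentiableAt.hasDerivAt
    exact (Hf.comp w Hg).deriv
  have chain1 : (fun _ : ℂ => (1:ℂ)) =ᶠ[nhds 0] F1 := by
    have := (hq.deriv.symm).trans E1
    rwa [deriv_id''] at this
  have g1 : deriv g 0 = 1 := by
    have h0 := chain1.eq_of_nhds
    simp [hF1, hg0, hf1] at h0
    exact h0.symm
  set F2 : ℂ → ℂ := fun w => deriv (deriv f) (g w) * deriv g w * deriv g w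
      + deriv f (g w) * deriv (deriv g) w with hF2
  have E2 : deriv F1 =ᶠ[nhds 0] F2 := by
    filter_upwards [hevg, hevf] with w hgw hfw
    have Hg : HasDerivAt g (deriv g w) w := hgw.differentiableAt.hasDerivAt
    have Hg1 : HasDerivAt (deriv g) (deriv (deriv g) w) w :=
      (myAnalyticAt.deriv hgw).differentiableAt.hasDerivAt
    have Hdf : HasDerivAt (deriv f) (deriv (deriv f) (g w)) (g w) :=
      (myAnalyticAt.deriv hfw).differentiableAt.hasDerivAt
    have Hf : HasDerivAt f (deriv f (g w)) (g w) := hfw.differentiableAt.hasDerivAt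
    exact ((Hdf.comp w Hg).mul Hg1).deriv
  have chain2 : (fun _ : ℂ => (0:ℂ)) =ᶠ[nhds 0] F2 := by
    have := chain1.deriv.trans E2
    have hc : deriv (fun _ : ℂ => (1:ℂ)) = fun _ : ℂ => (0:ℂ) := by funext x; simp
    rwa [hc] at this
  have g2 : deriv (deriv g) 0 = -(deriv (deriv f) 0) := by
    have h0 := chain2.eq_of_nhds
    simp [hF2, hg0, hf1, g1] at h0
    linear_combination -h0
  have chain3 : (fun _ : ℂ => (0:ℂ)) =ᶠ[nhds 0] deriv F2 := by
    have := chain2.deriv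
    have hc : deriv (fun _ : ℂ => (0:ℂ)) = fun _ : ℂ => (0:ℂ) := by funext x; simp
    rwa [hc] at this
  have h0 := chain3.eq_of_nhds
  have Hg : HasDerivAt g (deriv g 0) 0 := hg.differentiableAt.hasDerivAt
  have Hg1 : HasDerivAt (deriv g) (deriv (deriv g) 0) 0 :=
    (myAnalyticAt.deriv hg).differentiableAt.hasDerivAt
  have Hg2 : HasDerivAt (deriv (deriv g)) (deriv (deriv (deriv g)) 0) 0 :=
    (myAnalyticAt.deriv (myAnalyticAt.deriv hg)).differentiableAt.hasDerivAt
  have hfg : AnalyticAt ℂ f (g 0) := by rwa [hg0]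
  have Hdf : HasDerivAt (deriv f) (deriv (deriv f) (g 0)) (g 0) :=
    (myAnalyticAt.deriv hfg).differentiableAt.hasDerivAt
  have Hd2f : HasDerivAt (deriv (deriv f)) (deriv (deriv (deriv f)) (g 0)) (g 0) :=
    (myAnalyticAt.deriv (myAnalyticAt.deriv hfg)).differentiableAt.hasDerivAt
  have Hf : HasDerivAt f (deriv f (g 0)) (g 0) := hfg.differentiableAt.hasDerivAt
  have hder := (((Hd2f.comp 0 Hg).mul Hg1).mul Hg1).add ((Hdf.comp 0 Hg).mul Hg2)
  have h0' := h0.trans hder.deriv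
  simp only [Function.comp_apply, Pi.mul_apply, hg0, hf1, g1, g2] at h0'
  linear_combination -h0'

lemma mob_bound (a w : ℂ) (ha : ‖a‖ ≤ 1) (hw : ‖w‖ ≤ 1) :
    ‖w - a‖ ≤ ‖1 - (starRingEnd ℂ) a * w‖ := by
  have hna : Complex.normSq a ≤ 1 := by
    rw [← Complex.sq_norm]
    nlinarith [norm_nonneg a, ha]
  have hnw : Complex.normSq w ≤ 1 := by
    rw [← Complex.sq_norm]
    nlinarith [norm_nonneg w, hw]
  have key : Complex.normSq (1 - (starRingEnd ℂ) a * w) - Complex.normSq (w - a)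
      = (1 - Complex.normSq a) * (1 - Complex.normSq w) := by
    simp only [Complex.normSq_apply, Complex.sub_re, Complex.sub_im, Complex.mul_re,
      Complex.mul_im, Complex.conj_re, Complex.conj_im, Complex.one_re, Complex.one_im]
    ring
  have hsq : ‖w - a‖^2 ≤ ‖1 - (starRingEnd ℂ) a * w‖^2 := by
    rw [Complex.sq_norm, Complex.sq_norm]
    nlinarith
  nlinarith [norm_nonneg (w - a), norm_nonneg (1 - (starRingEnd ℂ) a * w)]

lemma SP0 (ψ : ℂ → ℂ) (hd : DifferentiableOn ℂ ψ (ball 0 1))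
    (hb : ∀ z ∈ ball (0:ℂ) 1, ‖ψ z‖ ≤ 1) :
    ‖deriv ψ 0‖ ≤ 1 - ‖ψ 0‖^2 := by
  have h0m : (0:ℂ) ∈ ball (0:ℂ) 1 := mem_ball_self one_pos
  by_cases hlt : ‖ψ 0‖ < 1
  · set a := ψ 0 with hadef
    have hden : ∀ z ∈ ball (0:ℂ) 1, 1 - (starRingEnd ℂ) a * ψ z ≠ 0 := by
      intro z hz h
      have h1 : (starRingEnd ℂ) a * ψ z = 1 := by linear_combination -h
      have : ‖(starRingEnd ℂ) a * ψ z‖ < 1 := by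
        rw [norm_mul, RCLike.norm_conj]
        calc ‖a‖ * ‖ψ z‖ ≤ ‖a‖ * 1 := by
              exact mul_le_mul_of_nonneg_left (hb z hz) (norm_nonneg a)
          _ < 1 := by simpa using hlt
      rw [h1] at this; simp at this
    set g : ℂ → ℂ := fun z => (ψ z - a) / (1 - (starRingEnd ℂ) a * ψ z) with hgdef
    have hgd : DifferentiableOn ℂ g (ball 0 1) := by
      apply DifferentiableOn.div
      · exact hd.sub (differentiableOn_const a)
      · exact (differentiableOn_const 1).sub ((differentiableOn_const _).mul hd)
      · exact hden
    have hg0 : g 0 = 0 := by simp [hgdef, hadef]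
    have hRb : ∀ R : ℝ, 1 < R → ‖deriv g 0‖ ≤ R := by
      intro R hR
      have maps : Set.MapsTo g (ball 0 1) (ball (g 0) R) := by
        intro z hz
        rw [mem_ball, dist_eq_norm, hg0, sub_zero]
        refine lt_of_le_of_lt ?_ hR
        rw [hgdef]
        simp only []
        rw [norm_div]
        exact div_le_one_of_le₀ (mob_bound a (ψ z) hlt.le (hb z hz)) (norm_nonneg _)
      have := Complex.norm_deriv_le_div_of_mapsTo_ball hgd (maps.mono_right ball_subset_closedBall) one_pos
      rw [div_one] at this
      exact this
    have hg1 : ‖deriv g 0‖ ≤ 1 := by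
      by_contra h
      push_neg at h
      have := hRb ((1 + ‖deriv g 0‖)/2) (by linarith)
      linarith
    -- compute deriv g 0
    have hψ0 : DifferentiableAt ℂ ψ 0 := hd.differentiableAt (isOpen_ball.mem_nhds h0m)
    have Hψ : HasDerivAt ψ (deriv ψ 0) 0 := hψ0.hasDerivAt
    have hden0 : 1 - (starRingEnd ℂ) a * ψ 0 ≠ 0 := hden 0 h0m
    have Hg := (Hψ.sub_const a).div ((Hψ.const_mul ((starRingEnd ℂ) a)).const_sub 1) hden0
    have hdg : deriv g 0 = _ := Hg.deriv
    have hone : 1 - (starRingEnd ℂ) a * a = ((1 - Complex.normSq a : ℝ) : ℂ) := by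
      push_cast
      rw [Complex.normSq_eq_conj_mul_self]
    have hpos : (0:ℝ) < 1 - Complex.normSq a := by
      have : Complex.normSq a < 1 := by
        rw [← Complex.sq_norm]
        nlinarith [norm_nonneg a, hlt]
      linarith
    have hval : deriv ψ 0 = deriv g 0 * (1 - (starRingEnd ℂ) a * a) := by
      rw [hdg, ← hadef]
      field_simp [show 1 - (starRingEnd ℂ) a * a ≠ 0 from hden0]
      ring
    have hnorm : ‖deriv ψ 0‖ = ‖deriv g 0‖ * (1 - Complex.normSq a) := by
      rw [hval, norm_mul, hone]
      congr 1
      rw [Complex.norm_real]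
      exact abs_of_pos hpos
    have hns : Complex.normSq a = ‖a‖^2 := by
      rw [← Complex.sq_norm]
    rw [hnorm, hns]
    nlinarith [norm_nonneg (deriv g 0)]
  · push_neg at hlt
    have heq1 : ‖ψ 0‖ = 1 := le_antisymm (hb 0 h0m) hlt
    have hmax : IsMaxOn (norm ∘ ψ) (ball (0:ℂ) 1) 0 := by
      intro z hz
      simp only [Function.comp_apply, heq1]
      exact hb z hz
    have heq := Complex.eqOn_of_isPreconnected_of_isMaxOn_norm
      (convex_ball (0:ℂ) 1).isPreconnected isOpen_ball hd h0m hmax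
    have hev : ψ =ᶠ[nhds (0:ℂ)] fun _ => ψ 0 :=
      heq.eventuallyEq_of_mem (isOpen_ball.mem_nhds h0m)
    have : deriv ψ 0 = 0 := by
      rw [hev.deriv.eq_of_nhds]; simp
    rw [this, heq1]; simp

lemma schwarz2 (w : ℂ → ℂ) (hw : DifferentiableOn ℂ w (ball 0 1)) (hw0 : w 0 = 0)
    (hwb : ∀ z ∈ ball (0:ℂ) 1, ‖w z‖ < 1) :
    ‖deriv w 0‖ ≤ 1 ∧ ‖deriv (deriv w) 0‖ ≤ 2*(1 - ‖deriv w 0‖^2) := by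
  have h0m : (0:ℂ) ∈ ball (0:ℂ) 1 := mem_ball_self one_pos
  have maps : Set.MapsTo w (ball 0 1) (ball (w 0) 1) := by
    intro z hz
    rw [mem_ball, dist_eq_norm, hw0, sub_zero]
    exact hwb z hz
  set φ := dslope w 0 with hφdef
  have hφb : ∀ z ∈ ball (0:ℂ) 1, ‖φ z‖ ≤ 1 := by
    intro z hz
    simpa using Complex.norm_dslope_le_div_of_mapsTo_ball hw (maps.mono_right ball_subset_closedBall) hz
  have hφd : DifferentiableOn ℂ φ (ball 0 1) :=
    (Complex.differentiableOn_dslope (ball_mem_nhds _ one_pos)).mpr hw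
  have hφ0 : φ 0 = deriv w 0 := dslope_same w 0
  have first : ‖deriv w 0‖ ≤ 1 := by rw [← hφ0]; exact hφb 0 h0m
  refine ⟨first, ?_⟩
  have hwz : ∀ z : ℂ, w z = z * φ z := by
    intro z
    have h := sub_smul_dslope w 0 z
    rw [hw0, sub_zero, sub_zero, smul_eq_mul] at h
    exact h.symm
  have hweq : w = fun z => z * φ z := funext hwz
  have hφa : AnalyticOnNhd ℂ φ (ball 0 1) := hφd.analyticOnNhd isOpen_ball
  have hev : ∀ᶠ z in nhds (0:ℂ), AnalyticAt ℂ φ z :=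
    (isOpen_ball.eventually_mem h0m).mono fun z hz => hφa z hz
  have E : deriv w =ᶠ[nhds (0:ℂ)] fun z => 1 * φ z + z * deriv φ z := by
    filter_upwards [hev] with z hz
    have Hφ : HasDerivAt φ (deriv φ z) z := hz.differentiableAt.hasDerivAt
    have h := (hasDerivAt_id z).mul Hφ
    rw [hweq]
    exact h.deriv
  have Hφ0 : HasDerivAt φ (deriv φ 0) 0 := (hφa 0 h0m).differentiableAt.hasDerivAt
  have Hφ1 : HasDerivAt (deriv φ) (deriv (deriv φ) 0) 0 :=
    (myAnalyticAt.deriv (hφa 0 h0m)).differentiableAt.hasDerivAt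
  have hder := (Hφ0.const_mul 1).add ((hasDerivAt_id 0).mul Hφ1)
  have h2 : deriv (deriv w) 0 = 2 * deriv φ 0 := by
    rw [E.deriv.eq_of_nhds]
    exact hder.deriv.trans (by simp; ring)
  have hb2 := SP0 φ hφd hφb
  rw [h2, hφ0] at *
  rw [norm_mul]
  simp only [Complex.norm_ofNat]
  nlinarith [hb2]

lemma one_sub_ne {u : ℂ} (h : ‖u‖ < 1) : 1 - u ≠ 0 := by
  intro he
  have : u = 1 := by linear_combination -he
  rw [this] at h
  simp at h

lemma iter3 (g : ℂ → ℂ) : iteratedDeriv 3 g 0 = deriv (deriv (deriv g)) 0 := by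
  simp [iteratedDeriv_succ, iteratedDeriv_zero]

/-- For f ∈ 𝒰(λ) with f(z)/z ≺ 1/((1-z)(1-λz)), the third coefficient of the
inverse satisfies |A₃| ≤ 1+3λ+λ², with equality for f_λ(z)=z/((1-z)(1-λz)). -/
theorem A3_bound (lam : ℝ) (hl0 : 0 < lam) (hl1 : lam ≤ 1)
    (f : ℂ → ℂ)
    (hf : DifferentiableOn ℂ f (ball (0:ℂ) 1))
    (hf0 : f 0 = 0) (hf1 : deriv f 0 = 1)
    (hU : ∀ z ∈ ball (0:ℂ) 1, z ≠ 0 →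
      ‖(z / f z) ^ 2 * deriv f z - 1‖ < lam)
    (ω : ℂ → ℂ)
    (hω : DifferentiableOn ℂ ω (ball (0:ℂ) 1))
    (hω0 : ω 0 = 0)
    (hωb : ∀ z ∈ ball (0:ℂ) 1, ‖ω z‖ < 1)
    (hsub : ∀ z ∈ ball (0:ℂ) 1, f z = z / ((1 - ω z) * (1 - (lam:ℂ) * ω z)))
    (g : ℂ → ℂ)
    (hg : AnalyticAt ℂ g 0) (hg0 : g 0 = 0)
    (hinv : ∀ᶠ w in nhds (0:ℂ), f (g w) = w)
    (A₃ : ℂ) (hA₃ : A₃ = iteratedDeriv 3 g 0 / 6) :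
    ‖A₃‖ ≤ 1 + 3*lam + lam^2 ∧
    (∀ gl : ℂ → ℂ, AnalyticAt ℂ gl 0 → gl 0 = 0 →
      (∀ᶠ w in nhds (0:ℂ), gl w / ((1 - gl w) * (1 - (lam:ℂ) * gl w)) = w) →
      ‖iteratedDeriv 3 gl 0 / 6‖ = 1 + 3*lam + lam^2) := by
  have h0m : (0:ℂ) ∈ ball (0:ℂ) 1 := mem_ball_self one_pos
  have hfa : AnalyticAt ℂ f 0 := (hf.analyticOnNhd isOpen_ball) 0 h0m
  have hwa : AnalyticAt ℂ ω 0 := (hω.analyticOnNhd isOpen_ball) 0 h0m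
  constructor
  · -- main bound
    have hEq : ∀ᶠ z in nhds (0:ℂ), z = f z * (1 - (1+(lam:ℂ)) * ω z + (lam:ℂ) * (ω z)^2) := by
      filter_upwards [isOpen_ball.eventually_mem h0m] with z hz
      have h1 : (1:ℂ) - ω z ≠ 0 := one_sub_ne (hωb z hz)
      have h2 : (1:ℂ) - (lam:ℂ) * ω z ≠ 0 := by
        apply one_sub_ne
        rw [norm_mul, Complex.norm_real]
        calc |lam| * ‖ω z‖ ≤ 1 * ‖ω z‖ := by
              apply mul_le_mul_of_nonneg_right _ (norm_nonneg _)
              rw [abs_of_pos hl0]; exact hl1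
          _ < 1 := by simpa using hωb z hz
      rw [hsub z hz,
        show (1:ℂ) - (1+(lam:ℂ)) * ω z + (lam:ℂ) * (ω z)^2
            = (1 - ω z) * (1 - (lam:ℂ) * ω z) from by ring,
        div_mul_cancel₀ _ (mul_ne_zero h1 h2)]
    obtain ⟨hd1, hd2, hd3⟩ := coefF (1+(lam:ℂ)) (lam:ℂ) f ω hfa hwa hω0 hEq
    have hg3 := inv3 f g hfa hg hg0 hf1 hinv
    obtain ⟨hs1, hs2⟩ := schwarz2 ω hω hω0 hωb
    have hA : A₃ = ((1+(lam:ℂ))^2+(lam:ℂ))*(deriv ω 0)^2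
        - ((1+(lam:ℂ))/2)*(deriv (deriv ω) 0) := by
      rw [hA₃, iter3, hg3, hd2, hd3]
      ring
    set s := ‖deriv ω 0‖ with hsdef
    set t := ‖deriv (deriv ω) 0‖ with htdef
    have hn1 : ‖(((1:ℂ)+(lam:ℂ))^2+(lam:ℂ))*(deriv ω 0)^2‖ = ((1+lam)^2+lam)*s^2 := by
      rw [norm_mul, norm_pow]
      congr 1
      rw [show ((1:ℂ)+(lam:ℂ))^2+(lam:ℂ) = (((1+lam)^2+lam : ℝ):ℂ) from by push_cast; ring,
        Complex.norm_real, Real.norm_eq_abs, abs_of_pos (by nlinarith [sq_nonneg (1+lam)])]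
    have hn2 : ‖((1+(lam:ℂ))/2)*(deriv (deriv ω) 0)‖ = ((1+lam)/2)*t := by
      rw [norm_mul]
      congr 1
      rw [show ((1:ℂ)+(lam:ℂ))/2 = (((1+lam)/2 : ℝ):ℂ) from by push_cast; ring,
        Complex.norm_real, Real.norm_eq_abs, abs_of_pos (by linarith)]
    have hnorm : ‖A₃‖ ≤ ((1+lam)^2+lam)*s^2 + ((1+lam)/2)*t := by
      calc ‖A₃‖ ≤ ‖(((1:ℂ)+(lam:ℂ))^2+(lam:ℂ))*(deriv ω 0)^2‖
            + ‖((1+(lam:ℂ))/2)*(deriv (deriv ω) 0)‖ := by rw [hA]; exact norm_sub_le _ _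
        _ = ((1+lam)^2+lam)*s^2 + ((1+lam)/2)*t := by rw [hn1, hn2]
    have hs0 : 0 ≤ s := norm_nonneg _
    have ht0 : 0 ≤ t := norm_nonneg _
    have hkey : ((1+lam)/2)*t ≤ ((1+lam)/2)*(2*(1-s^2)) :=
      mul_le_mul_of_nonneg_left hs2 (by linarith)
    nlinarith [hnorm, hs1, hs0, hkey, mul_le_mul hs1 hs1 hs0 zero_le_one]
  · -- equality case
    intro gl hgl hgl0 hglinv
    set flam : ℂ → ℂ := fun z => z / ((1 - z) * (1 - (lam:ℂ) * z)) with hflamdef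
    have hden_a : AnalyticAt ℂ (fun z : ℂ => (1 - z) * (1 - (lam:ℂ) * z)) 0 :=
      ((analyticAt_const.sub analyticAt_id).mul
        (analyticAt_const.sub (analyticAt_const.mul analyticAt_id)))
    have hflam_a : AnalyticAt ℂ flam 0 := by
      apply AnalyticAt.div analyticAt_id hden_a
      simp
    have hEqf : ∀ᶠ z in nhds (0:ℂ), z = flam z * (1 - (1+(lam:ℂ)) * z + (lam:ℂ) * z^2) := by
      have hc : ContinuousAt (fun z : ℂ => (1 - z) * (1 - (lam:ℂ) * z)) 0 := by fun_prop
      filter_upwards [hc.eventually_ne (y := 0) (by simp)] with z hz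
      rw [hflamdef]
      simp only []
      rw [show (1:ℂ) - (1+(lam:ℂ)) * z + (lam:ℂ) * z^2
            = (1 - z) * (1 - (lam:ℂ) * z) from by ring,
        div_mul_cancel₀ _ hz]
    obtain ⟨he1, he2, he3⟩ := coefF (1+(lam:ℂ)) (lam:ℂ) flam (fun z => z) hflam_a
      analyticAt_id rfl (by simpa using hEqf)
    have hid1 : deriv (fun z : ℂ => z) 0 = 1 := by simp
    have hid2 : deriv (deriv (fun z : ℂ => z)) 0 = 0 := by
      rw [deriv_id'']
      simp
    rw [hid1] at he2 he3
    rw [hid2] at he3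
    have hglinv' : ∀ᶠ w in nhds (0:ℂ), flam (gl w) = w := hglinv
    have hgl3 := inv3 flam gl hflam_a hgl hgl0 he1 hglinv'
    rw [he2, he3] at hgl3
    rw [iter3, hgl3]
    rw [show (3*(2*(1+(lam:ℂ))*1)^2 - (6*(1+(lam:ℂ))^2*1^2 + 3*(1+(lam:ℂ))*0 - 6*(lam:ℂ)*1^2))/6
        = (((1+3*lam+lam^2 : ℝ)):ℂ) from by push_cast; ring]
    rw [Complex.norm_real, Real.norm_eq_abs, abs_of_pos (by nlinarith [sq_nonneg lam])]
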